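/- For every integer r ≥ 2, if n = Σ_{j=1}^{r} r^(6^(r-j)), then every colouring of [3]^n with r colours contains a monochromatic combinatorial line. In particular, HJ(3,r) ≤ Σ_{j=1}^{r} r^(6^(r-j)). -/

import Mathlib

namespace HJ3aux

open Finset

/-- Word of length `s` over `Fin 3`: letter `0` on `[0,a)`, `x` on `[a,b)`, `1` on `[b,s)`. -/
def bw (s a b : ℕ) (x : Fin 3) : Fin s → Fin 3 :=
  fun p => if (p : ℕ) < a then 0 else if (p : ℕ) < b then x else 1

/-- Step word: `0` on `[0,a)`, `1` afterwards. -/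
def sw (s a : ℕ) : Fin s → Fin 3 := fun p => if (p : ℕ) < a then 0 else 1

lemma bw_zero {s a b : ℕ} (hab : a ≤ b) : bw s a b 0 = sw s b := by
  funext p; simp only [bw, sw]
  rcases lt_or_ge (p : ℕ) a with h | h
  · rw [if_pos h, if_pos (lt_of_lt_of_le h hab)]
  · rw [if_neg (not_lt.2 h)]

lemma bw_one {s a b : ℕ} : bw s a b 1 = sw s a := by
  funext p; simp only [bw, sw]
  rcases lt_or_ge (p : ℕ) a with h | h
  · rw [if_pos h, if_pos h]
  · rw [if_neg (not_lt.2 h), if_neg (not_lt.2 h)]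
    split <;> rfl

/-- Generalized threshold line point: in block `i`, the letter used on the middle
segment is `(σ i).getD x`. -/
def glp {k : ℕ} (s a b : Fin k → ℕ) (σ : Fin k → Option (Fin 3)) (x : Fin 3) :
    ∀ i, Fin (s i) → Fin 3 :=
  fun i => bw (s i) (a i) (b i) ((σ i).getD x)

def Bounds {k : ℕ} (s a b : Fin k → ℕ) : Prop := ∀ i, a i < b i ∧ b i ≤ s i

/-- There is a monochromatic combinatorial line of threshold form. -/
def HasMonoT (r : ℕ) {k : ℕ} (s : Fin k → ℕ)
    (χ : (∀ i, Fin (s i) → Fin 3) → Fin r) : Prop :=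
  ∃ a b σ, Bounds s a b ∧ (∃ i, σ i = none) ∧
    ∀ x, χ (glp s a b σ x) = χ (glp s a b σ 0)

/-- Pattern of the `t`-th focused line: blocks `i ≤ t` carry the variable letter,
blocks `i > t` carry letter `2`. -/
def sigt {k : ℕ} (t : ℕ) : Fin k → Option (Fin 3) :=
  fun i => if (i : ℕ) ≤ t then none else some 2

/-- A family of `k` lines, all focused at the common point `glp s a b _ 2`, with
pairwise distinct colours. -/
def Focused (r : ℕ) {k : ℕ} (s : Fin k → ℕ)
    (χ : (∀ i, Fin (s i) → Fin 3) → Fin r) : Prop :=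
  ∃ a b, ∃ c : Fin k → Fin r, Bounds s a b ∧ Function.Injective c ∧
    ∀ t : Fin k, χ (glp s a b (sigt (t : ℕ)) 0) = χ (glp s a b (sigt (t : ℕ)) 1) ∧
      χ (glp s a b (sigt (t : ℕ)) 0) = c t

/-- Size hypotheses on the blocks. -/
def Hyp (r : ℕ) : ∀ k, (Fin k → ℕ) → Prop
  | 0, _ => True
  | k + 1, s => ((∏ i : Fin k, (s i.succ + 1) ^ 2) * r ^ (k + 1) ≤ s 0) ∧
      Hyp r k (fun i => s i.succ)

lemma glp_cons {k : ℕ} (s : Fin (k + 1) → ℕ) (a0 b0 : ℕ) (ℓ : Option (Fin 3))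
    (a b : Fin k → ℕ) (σ : Fin k → Option (Fin 3)) (x : Fin 3) :
    glp s (Fin.cons a0 a) (Fin.cons b0 b) (Fin.cons ℓ σ) x
      = Fin.cons (α := fun i => Fin (s i) → Fin 3) (bw (s 0) a0 b0 (ℓ.getD x))
          (glp (fun i => s i.succ) a b σ x) := by
  funext i
  refine Fin.cases ?_ (fun j => ?_) i
  · rfl
  · rfl

lemma glp_two {k : ℕ} (s a b : Fin k → ℕ) (t : ℕ) :
    glp s a b (sigt t) 2 = fun i => bw (s i) (a i) (b i) 2 := by
  funext i
  simp only [glp, sigt]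
  split <;> rfl

lemma sigt_cons_zero {k : ℕ} :
    (sigt 0 : Fin (k + 1) → Option (Fin 3)) = Fin.cons none (fun _ => some 2) := by
  funext i
  refine Fin.cases ?_ (fun j => ?_) i
  · rfl
  · simp [sigt, Fin.val_succ]

lemma sigt_cons_succ {k : ℕ} (t : ℕ) :
    (sigt (t + 1) : Fin (k + 1) → Option (Fin 3)) = Fin.cons none (sigt t) := by
  funext i
  refine Fin.cases ?_ (fun j => ?_) i
  · rfl
  · simp [sigt, Fin.val_succ]

lemma sigt_self {k : ℕ} (t : Fin k) : sigt (t : ℕ) t = none := by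
  simp [sigt]

lemma sw_as_bw {s a : ℕ} (ha : a ≤ s) (hs : 0 < s) :
    ∃ a0 b0 : ℕ, ∃ ℓ : Fin 3, a0 < b0 ∧ b0 ≤ s ∧ bw s a0 b0 ℓ = sw s a := by
  rcases lt_or_eq_of_le ha with h | h
  · refine ⟨a, s, 1, h, le_rfl, ?_⟩
    funext p; simp only [bw, sw]
    split
    · rfl
    · rw [if_pos p.isLt]
  · subst h
    refine ⟨0, a, 0, hs, le_rfl, ?_⟩
    funext p; simp only [bw, sw]
    rw [if_neg (by omega : ¬ (p : ℕ) < 0)]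

/-- Lifting a threshold mono line from the tail cube, with block `0` frozen to the
step word `sw (s 0) a`. -/
lemma lift_mono {r k : ℕ} (s : Fin (k + 1) → ℕ) (hs0 : 0 < s 0) (a : ℕ) (ha : a ≤ s 0)
    (χ : (∀ i, Fin (s i) → Fin 3) → Fin r)
    (h : HasMonoT r (fun i => s i.succ)
      (fun y => χ (Fin.cons (α := fun i => Fin (s i) → Fin 3) (sw (s 0) a) y))) :
    HasMonoT r s χ := by
  obtain ⟨ai, bi, σ, hb, ⟨i0, hi0⟩, hm⟩ := h
  obtain ⟨a0, b0, ℓ, h1, h2, h3⟩ := sw_as_bw ha hs0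
  refine ⟨Fin.cons a0 ai, Fin.cons b0 bi, Fin.cons (some ℓ) σ, ?_,
    ⟨i0.succ, by simp [Fin.cons_succ, hi0]⟩, ?_⟩
  · intro i
    refine Fin.cases ?_ (fun j => ?_) i
    · simpa using ⟨h1, h2⟩
    · simpa using hb j
  · intro x
    rw [glp_cons, glp_cons]
    simp only [Option.getD_some, h3]
    exact hm x

set_option maxHeartbeats 1000000 in
set_option synthInstance.maxHeartbeats 400000 in
theorem claim (r : ℕ) (hr : 2 ≤ r) :
    ∀ (k : ℕ) (s : Fin k → ℕ), Hyp r k s →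
      ∀ χ : (∀ i, Fin (s i) → Fin 3) → Fin r, HasMonoT r s χ ∨ Focused r s χ := by
  intro k
  induction k with
  | zero =>
    intro s _ χ
    exact Or.inr ⟨Fin.elim0, Fin.elim0, Fin.elim0, fun i => i.elim0,
      fun i => i.elim0, fun t => t.elim0⟩
  | succ k ih =>
    intro s hyp χ
    obtain ⟨hcard, hyptail⟩ := hyp
    have hs0pos : 0 < s 0 := lt_of_lt_of_le (by positivity) hcard
    set s' : Fin k → ℕ := fun i => s i.succ with hs'def
    have hcard' : (∏ i : Fin k, (s' i + 1) ^ 2) * r ^ (k + 1) ≤ s 0 := hcard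
    set χa : Fin (s 0 + 1) → ((∀ i, Fin (s' i) → Fin 3) → Fin r) :=
      fun a y => χ (Fin.cons (α := fun i => Fin (s i) → Fin 3) (sw (s 0) (a : ℕ)) y)
      with hχa
    by_cases hL : ∃ a : Fin (s 0 + 1), HasMonoT r s' (χa a)
    · obtain ⟨a, ha⟩ := hL
      exact Or.inl (lift_mono s hs0pos (a : ℕ) (Nat.lt_succ_iff.1 a.isLt) χ ha)
    · push_neg at hL
      have hR : ∀ a : Fin (s 0 + 1), Focused r s' (χa a) := by
        intro a
        rcases ih s' hyptail (χa a) with h | h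
        · exact absurd h (hL a)
        · exact h
      choose A B C hb hinj hcol using hR
      set F : Fin (s 0 + 1) → (∀ i, Fin (s' i) → Fin 3) :=
        fun a => fun i => bw (s' i) (A a i) (B a i) 2 with hF
      set γ : Fin (s 0 + 1) → Fin r := fun a => χa a (F a) with hγ
      set D : Fin (s 0 + 1) →
          ((∀ i : Fin k, Fin (s' i + 1) × Fin (s' i + 1)) × (Fin k → Fin r) × Fin r) :=
        fun a => (fun i => (⟨A a i, by have := hb a i; omega⟩,
          ⟨B a i, by have := hb a i; omega⟩), C a, γ a) with hD
      have hlt : Fintype.card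
          ((∀ i : Fin k, Fin (s' i + 1) × Fin (s' i + 1)) × (Fin k → Fin r) × Fin r)
          < Fintype.card (Fin (s 0 + 1)) := by
        have hcardeq : Fintype.card
            ((∀ i : Fin k, Fin (s' i + 1) × Fin (s' i + 1)) × (Fin k → Fin r) × Fin r)
            = (∏ i : Fin k, (s' i + 1) ^ 2) * r ^ (k + 1) := by
          rw [Fintype.card_prod, Fintype.card_prod, Fintype.card_pi, Fintype.card_fun,
            Fintype.card_fin]
          have h1 : ∀ i : Fin k, Fintype.card (Fin (s' i + 1) × Fin (s' i + 1))
              = (s' i + 1) ^ 2 := by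
            intro i
            rw [Fintype.card_prod, Fintype.card_fin, sq]
          rw [Finset.prod_congr rfl (fun i _ => h1 i), Fintype.card_fin, pow_succ]
        rw [hcardeq, Fintype.card_fin]
        exact Nat.lt_succ_of_le hcard'
      obtain ⟨x, y, hxy, hDeq⟩ := Fintype.exists_ne_map_eq_of_card_lt D hlt
      have hvne : (x : ℕ) ≠ (y : ℕ) := fun h => hxy (Fin.val_injective h)
      wlog hlt2 : (x : ℕ) < (y : ℕ) generalizing x y
      · exact this y x hxy.symm hDeq.symm (fun h => hxy (Fin.val_injective h.symm))
          (by omega)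
      -- extract equalities from the pigeonhole collision
      have hA : A x = A y := by
        funext i
        exact congrArg (fun q => ((q.1 : ℕ))) (congrFun (congrArg Prod.fst hDeq) i)
      have hB : B x = B y := by
        funext i
        exact congrArg (fun q => ((q.2 : ℕ))) (congrFun (congrArg Prod.fst hDeq) i)
      have hC : C x = C y := congrArg (fun q => q.2.1) hDeq
      have hγeq : γ x = γ y := congrArg (fun q => q.2.2) hDeq
      have hFxy : F x = F y := by
        funext i
        show bw (s' i) (A x i) (B x i) 2 = bw (s' i) (A y i) (B y i) 2
        rw [hA, hB]
      have hfin3 : ∀ z : Fin 3, z = 0 ∨ z = 1 ∨ z = 2 := by decide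
      by_cases hmem : ∃ t, C x t = γ x
      · -- monochromatic line found
        obtain ⟨t, ht⟩ := hmem
        refine Or.inl (lift_mono s hs0pos (x : ℕ) (Nat.lt_succ_iff.1 x.isLt) χ ?_)
        refine ⟨A x, B x, sigt (t : ℕ), hb x, ⟨t, sigt_self t⟩, ?_⟩
        intro z
        rcases hfin3 z with rfl | rfl | rfl
        · rfl
        · exact (hcol x t).1.symm
        · show χa x (glp s' (A x) (B x) (sigt (t : ℕ)) 2) = _
          rw [glp_two]
          show γ x = _
          rw [← ht]
          exact ((hcol x t).2).symm
      · -- extend the focused family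
        push_neg at hmem
        refine Or.inr ⟨Fin.cons (x : ℕ) (A x), Fin.cons (y : ℕ) (B x),
          Fin.cons (γ x) (C x), ?_, ?_, ?_⟩
        · intro i
          refine Fin.cases ?_ (fun j => ?_) i
          · simp only [Fin.cons_zero]
            exact ⟨hlt2, Nat.lt_succ_iff.1 y.isLt⟩
          · simpa using hb x j
        · rw [Fin.cons_injective_iff]
          exact ⟨by rintro ⟨t, ht⟩; exact hmem t ht, hinj x⟩
        · intro t
          refine Fin.cases ?_ (fun u => ?_) t
          · -- the new line (index 0)
            have e0 : ∀ z : Fin 3,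
                glp s (Fin.cons (x : ℕ) (A x)) (Fin.cons (y : ℕ) (B x))
                  (sigt (((0 : Fin (k + 1))) : ℕ)) z
                = Fin.cons (α := fun i => Fin (s i) → Fin 3)
                    (bw (s 0) (x : ℕ) (y : ℕ) z) (F x) := by
              intro z
              rw [show (((0 : Fin (k + 1))) : ℕ) = 0 from rfl, sigt_cons_zero, glp_cons]
              rfl
            have h5 : χa y (F x) = γ y := by rw [hFxy]
            have h6 : χa x (F x) = γ x := rfl
            constructor
            · rw [e0 0, e0 1, bw_zero (le_of_lt hlt2), bw_one]
              exact h5.trans (hγeq.symm.trans h6.symm)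
            · rw [e0 0, bw_zero (le_of_lt hlt2)]
              refine h5.trans ?_
              rw [Fin.cons_zero]
              exact hγeq.symm
          · -- the old lines (index u.succ)
            have es : ∀ z : Fin 3,
                glp s (Fin.cons (x : ℕ) (A x)) (Fin.cons (y : ℕ) (B x))
                  (sigt ((u.succ : Fin (k + 1)) : ℕ)) z
                = Fin.cons (α := fun i => Fin (s i) → Fin 3)
                    (bw (s 0) (x : ℕ) (y : ℕ) z)
                    (glp s' (A x) (B x) (sigt (u : ℕ)) z) := by
              intro z
              rw [show ((u.succ : Fin (k + 1)) : ℕ) = (u : ℕ) + 1 from Fin.val_succ u,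
                sigt_cons_succ, glp_cons]
              rfl
            have hL0 : χa y (glp s' (A x) (B x) (sigt (u : ℕ)) 0) = C y u := by
              rw [hA, hB]; exact (hcol y u).2
            have hR1 : χa x (glp s' (A x) (B x) (sigt (u : ℕ)) 1) = C x u := by
              rw [← (hcol x u).1]; exact (hcol x u).2
            constructor
            · rw [es 0, es 1, bw_zero (le_of_lt hlt2), bw_one]
              exact hL0.trans ((congrFun hC u).symm.trans hR1.symm)
            · rw [es 0, bw_zero (le_of_lt hlt2)]
              refine hL0.trans ?_
              rw [Fin.cons_succ]
              exact (congrFun hC u).symm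

lemma key_ineq {r : ℕ} (hr : 2 ≤ r) :
    ∀ K, (∏ m ∈ range K, (r ^ 6 ^ m + 1) ^ 2) * r ^ (K + 1) ≤ r ^ 6 ^ K := by
  intro K
  induction K with
  | zero => simp
  | succ K ihK =>
    have hpow1 : 1 ≤ r ^ 6 ^ K := Nat.one_le_pow _ _ (by omega)
    have h1 : r ^ 6 ^ K + 1 ≤ r ^ (6 ^ K + 1) := by
      calc r ^ 6 ^ K + 1 ≤ 2 * r ^ 6 ^ K := by omega
        _ ≤ r * r ^ 6 ^ K := Nat.mul_le_mul_right _ hr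
        _ = r ^ (6 ^ K + 1) := by rw [pow_succ]; ring
    have hstep : (r ^ 6 ^ K + 1) ^ 2 ≤ r ^ (2 * 6 ^ K + 2) := by
      calc (r ^ 6 ^ K + 1) ^ 2 ≤ (r ^ (6 ^ K + 1)) ^ 2 := Nat.pow_le_pow_left h1 2
        _ = r ^ (2 * 6 ^ K + 2) := by rw [← pow_mul]; congr 1; ring
    calc (∏ m ∈ range (K + 1), (r ^ 6 ^ m + 1) ^ 2) * r ^ (K + 1 + 1)
        = ((∏ m ∈ range K, (r ^ 6 ^ m + 1) ^ 2) * r ^ (K + 1)) *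
            ((r ^ 6 ^ K + 1) ^ 2 * r) := by
          rw [prod_range_succ, pow_succ]; ring
      _ ≤ (r ^ 6 ^ K) * (r ^ (2 * 6 ^ K + 2) * r) :=
          Nat.mul_le_mul ihK (Nat.mul_le_mul_right _ hstep)
      _ = r ^ (6 ^ K + (2 * 6 ^ K + 2) + 1) := by
          rw [pow_add, pow_add, pow_one]; ring
      _ ≤ r ^ 6 ^ (K + 1) := by
          have h6 : 6 ^ K + (2 * 6 ^ K + 2) + 1 ≤ 6 ^ (K + 1) := by
            have h7 : 6 ^ (K + 1) = 6 * 6 ^ K := by rw [pow_succ]; ring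
            have h8 : 1 ≤ 6 ^ K := Nat.one_le_pow _ _ (by omega)
            omega
          exact Nat.pow_le_pow_right (by omega) h6

lemma hyp_holds {r : ℕ} (hr : 2 ≤ r) :
    ∀ K, Hyp r K (fun j : Fin K => r ^ 6 ^ (K - 1 - (j : ℕ))) := by
  intro K
  induction K with
  | zero => trivial
  | succ K ihK =>
    constructor
    · -- head inequality
      have hre : ∀ i : Fin K,
          ((fun j : Fin (K + 1) => r ^ 6 ^ (K + 1 - 1 - (j : ℕ))) i.succ + 1) ^ 2
            = (r ^ 6 ^ (K - 1 - (i : ℕ)) + 1) ^ 2 := by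
        intro i
        have h9 : K + 1 - 1 - ((i.succ : Fin (K + 1)) : ℕ) = K - 1 - (i : ℕ) := by
          rw [Fin.val_succ]; omega
        simp only [h9]
      calc (∏ i : Fin K,
            ((fun j : Fin (K + 1) => r ^ 6 ^ (K + 1 - 1 - (j : ℕ))) i.succ + 1) ^ 2)
            * r ^ (K + 1)
          = (∏ m ∈ range K, (r ^ 6 ^ (K - 1 - m) + 1) ^ 2) * r ^ (K + 1) := by
            rw [Finset.prod_congr rfl (fun i _ => hre i),
              Fin.prod_univ_eq_prod_range (fun m => (r ^ 6 ^ (K - 1 - m) + 1) ^ 2) K]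
        _ = (∏ m ∈ range K, (r ^ 6 ^ m + 1) ^ 2) * r ^ (K + 1) := by
            rw [prod_range_reflect (fun m => (r ^ 6 ^ m + 1) ^ 2) K]
        _ ≤ r ^ 6 ^ K := key_ineq hr K
        _ = (fun j : Fin (K + 1) => r ^ 6 ^ (K + 1 - 1 - (j : ℕ))) 0 := by norm_num
    · -- tail
      have heq : (fun i : Fin K =>
          (fun j : Fin (K + 1) => r ^ 6 ^ (K + 1 - 1 - (j : ℕ))) i.succ)
          = fun j : Fin K => r ^ 6 ^ (K - 1 - (j : ℕ)) := by
        funext i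
        have : K + 1 - 1 - ((i.succ : Fin (K + 1)) : ℕ) = K - 1 - (i : ℕ) := by
          rw [Fin.val_succ]; omega
        simp only [this]
      rw [heq]
      exact ihK

lemma monoT_final {r : ℕ} (hr : 2 ≤ r) (s : Fin r → ℕ) (hyp : Hyp r r s)
    (χ : (∀ i, Fin (s i) → Fin 3) → Fin r) : HasMonoT r s χ := by
  rcases claim r hr r s hyp χ with h | ⟨a, b, c, hb, hinj, hcol⟩
  · exact h
  · have hsurj : Function.Surjective c := Finite.surjective_of_injective hinj
    obtain ⟨t, ht⟩ := hsurj (χ (fun i => bw (s i) (a i) (b i) 2))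
    refine ⟨a, b, sigt (t : ℕ), hb, ⟨t, sigt_self t⟩, ?_⟩
    intro z
    have hfin3 : ∀ z : Fin 3, z = 0 ∨ z = 1 ∨ z = 2 := by decide
    rcases hfin3 z with rfl | rfl | rfl
    · rfl
    · exact (hcol t).1.symm
    · rw [glp_two]
      exact ht.symm.trans ((hcol t).2).symm


/-- Transfer a threshold mono line on the sigma-cube to a `Combinatorics.Line` on `Fin N`. -/
lemma transfer {r N : ℕ} (hr : 2 ≤ r) (s : Fin r → ℕ) (hyp : Hyp r r s)
    (hcard2 : Fintype.card (Σ j : Fin r, Fin (s j)) = N)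
    (χ : (Fin N → Fin 3) → Fin r) :
    ∃ l : Combinatorics.Line (Fin 3) (Fin N), l.IsMono χ := by
  classical
  let ε : (Σ j : Fin r, Fin (s j)) ≃ Fin N := Fintype.equivFinOfCardEq hcard2
  let χ' : (∀ i : Fin r, Fin (s i) → Fin 3) → Fin r :=
    fun y => χ (fun n => y (ε.symm n).1 (ε.symm n).2)
  obtain ⟨a, b, σ, hb, ⟨i0, hi0⟩, hm⟩ := monoT_final hr s hyp χ'
  refine ⟨⟨fun n => if σ (ε.symm n).1 = none ∧ a (ε.symm n).1 ≤ ((ε.symm n).2 : ℕ)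
      ∧ ((ε.symm n).2 : ℕ) < b (ε.symm n).1 then none
      else some (bw (s (ε.symm n).1) (a (ε.symm n).1) (b (ε.symm n).1)
        ((σ (ε.symm n).1).getD 0) (ε.symm n).2), ?_⟩, ?_⟩
  · have key : ∀ q : (Σ j : Fin r, Fin (s j)), σ q.1 = none → a q.1 ≤ (q.2 : ℕ) →
        (q.2 : ℕ) < b q.1 →
        (if σ (ε.symm (ε q)).1 = none ∧ a (ε.symm (ε q)).1 ≤ ((ε.symm (ε q)).2 : ℕ)
            ∧ ((ε.symm (ε q)).2 : ℕ) < b (ε.symm (ε q)).1 then none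
          else some (bw (s (ε.symm (ε q)).1) (a (ε.symm (ε q)).1) (b (ε.symm (ε q)).1)
            ((σ (ε.symm (ε q)).1).getD 0) (ε.symm (ε q)).2)) = none := by
      intro q h1 h2 h3
      rw [Equiv.symm_apply_apply]
      exact if_pos ⟨h1, h2, h3⟩
    exact ⟨ε ⟨i0, ⟨a i0, lt_of_lt_of_le (hb i0).1 (hb i0).2⟩⟩,
      key _ hi0 le_rfl (hb i0).1⟩
  · refine ⟨χ' (glp s a b σ 0), fun z => ?_⟩
    have hpt : ∀ n, (if σ (ε.symm n).1 = none ∧ a (ε.symm n).1 ≤ ((ε.symm n).2 : ℕ)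
        ∧ ((ε.symm n).2 : ℕ) < b (ε.symm n).1 then none
        else some (bw (s (ε.symm n).1) (a (ε.symm n).1) (b (ε.symm n).1)
          ((σ (ε.symm n).1).getD 0) (ε.symm n).2)).getD z
        = glp s a b σ z (ε.symm n).1 (ε.symm n).2 := by
      intro n
      set i := (ε.symm n).1
      set p := (ε.symm n).2
      by_cases h : σ i = none ∧ a i ≤ (p : ℕ) ∧ (p : ℕ) < b i
      · rw [if_pos h, Option.getD_none]
        simp only [glp, h.1, Option.getD_none, bw]
        rw [if_neg (not_lt.2 h.2.1), if_pos h.2.2]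
        exact (congrArg (fun o => Option.getD o z) h.1).symm
      · rw [if_neg h, Option.getD_some]
        cases hσ : σ i with
        | some ℓ => simp only [glp, hσ, Option.getD_some]; rw [show σ (ε.symm n).fst = some ℓ from hσ, Option.getD_some]
        | none =>
          have hout : ¬(a i ≤ (p : ℕ) ∧ (p : ℕ) < b i) := fun hc => h ⟨hσ, hc⟩
          simp only [glp, hσ, Option.getD_none, bw]
          rcases lt_or_ge (p : ℕ) (a i) with hpa | hpa
          · rw [if_pos hpa, if_pos hpa]
          · rw [if_neg (not_lt.2 hpa), if_neg (not_lt.2 hpa),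
              if_neg (by omega : ¬ (p : ℕ) < b i), if_neg (by omega : ¬ (p : ℕ) < b i)]
    exact (congrArg χ (funext hpt)).trans (hm z)

end HJ3aux

open HJ3aux in
/-- For every integer `r ≥ 2`, if `n = Σ_{j=1}^{r} r^(6^(r-j))`, then every
`r`-colouring of `[3]^n` contains a monochromatic combinatorial line; in particular
`HJ(3,r) ≤ Σ_{j=1}^{r} r^(6^(r-j))`. -/
theorem HJ3_explicit_sum_bound :
    ∀ r : ℕ, 2 ≤ r →
      ∀ χ : (Fin (∑ j ∈ Finset.Icc 1 r, r ^ 6 ^ (r - j)) → Fin 3) → Fin r,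
        ∃ l : Combinatorics.Line (Fin 3) (Fin (∑ j ∈ Finset.Icc 1 r, r ^ 6 ^ (r - j))),
          l.IsMono χ := by
  intro r hr χ
  refine transfer hr (fun j : Fin r => r ^ 6 ^ (r - 1 - (j : ℕ))) (hyp_holds hr r) ?_ χ
  rw [Fintype.card_sigma]
  simp only [Fintype.card_fin]
  rw [Fin.sum_univ_eq_sum_range (fun m => r ^ 6 ^ (r - 1 - m)) r]
  rw [show Finset.Icc 1 r = Finset.Ico 1 (r + 1) from (Finset.Ico_add_one_right_eq_Icc 1 r).symm,
    Finset.sum_Ico_eq_sum_range]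
  simp only [Nat.add_sub_cancel]
  refine Finset.sum_congr rfl fun m hm => ?_
  congr 2
  omega
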